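/- arXiv:1806.04424 — 2 statements merged into one kernel-verified Lean document; each statement's English description precedes it below -/
import Mathlib

section
/- Let q, z, c be complex numbers with |q| < 1, |zq| < 1 and |c| ≤ 1. Then ∑_{n=1}^{∞} (q;q)_{n−1} z^n q^n / ((1 − c q^n) (zq;q)_n) = ∑_{n=1}^{∞} z q^n [∏_{k=1}^{n-1}(c − z q^k)] / ((zq;q)_n (1 − z q^n)). (For c ≠ 0 the right-hand side equals z ∑_{n=1}^{∞} (zq/c;q)_{n−1} c^{n−1} q^n / ((zq;q)_n (1 − z q^n)).) -/
open Finset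

/-- The finite q-Pochhammer symbol `(a;q)_n = ∏_{k=0}^{n-1} (1 - a q^k)`. -/
noncomputable def qPoch (a q : ℂ) (n : ℕ) : ℂ := ∏ k ∈ Finset.range n, (1 - a * q ^ k)

namespace Stmt15

lemma geom_sum_le_inv {x : ℝ} (h0 : 0 ≤ x) (h1 : x < 1) (n : ℕ) :
    ∑ k ∈ range n, x ^ k ≤ (1 - x)⁻¹ := by
  calc ∑ k ∈ range n, x ^ k ≤ ∑' k : ℕ, x ^ k :=
        Summable.sum_le_tsum _ (fun i _ => pow_nonneg h0 i) (summable_geometric_of_lt_one h0 h1)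
  _ = (1 - x)⁻¹ := tsum_geometric_of_lt_one h0 h1

lemma exp_aux {r u : ℝ} (hr : r < 1) (h0 : 0 ≤ u) (hur : u ≤ r) :
    Real.exp (-(u / (1 - r))) ≤ 1 - u := by
  have h1 : (0:ℝ) < 1 - r := by linarith
  have h5 : (1 - r) ≤ (1 - u) * (u + (1 - r)) := by nlinarith
  have h7 : (1:ℝ) ≤ (1 - u) * (u / (1 - r) + 1) := by
    rw [show (1 - u) * (u / (1 - r) + 1) = (1 - u) * (u + (1 - r)) / (1 - r) by field_simp,
      le_div_iff₀ h1]
    linarith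
  have h4 : (1:ℝ) ≤ (1 - u) * Real.exp (u / (1 - r)) := by
    refine h7.trans ?_
    have hu1 : (0:ℝ) ≤ 1 - u := by linarith
    have := Real.add_one_le_exp (u / (1 - r))
    nlinarith
  rw [Real.exp_neg, inv_eq_one_div, div_le_iff₀ (Real.exp_pos _)]
  linarith

lemma core_upper {x ρ : ℝ} (hx : 0 ≤ x) (hρ0 : 0 ≤ ρ) (hρ : ρ < 1) (n : ℕ) :
    ∏ k ∈ range n, (1 + x * ρ ^ k) ≤ Real.exp (x / (1 - ρ)) := by
  have h1 : ∏ k ∈ range n, (1 + x * ρ ^ k) ≤ Real.exp (∑ k ∈ range n, x * ρ ^ k) := by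
    rw [Real.exp_sum]
    refine Finset.prod_le_prod (fun i _ => by positivity) (fun i _ => ?_)
    linarith [Real.add_one_le_exp (x * ρ ^ i)]
  refine h1.trans ?_
  rw [Real.exp_le_exp, ← Finset.mul_sum, div_eq_mul_inv]
  exact mul_le_mul_of_nonneg_left (geom_sum_le_inv hρ0 hρ n) hx

lemma core_lower {x r ρ : ℝ} (hx : 0 ≤ x) (hxr : x ≤ r) (hr : r < 1)
    (hρ0 : 0 ≤ ρ) (hρ : ρ < 1) (n : ℕ) :
    Real.exp (-(r / (1 - ρ)) / (1 - r)) ≤ ∏ k ∈ range n, (1 - x * ρ ^ k) := by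
  have h1r : (0:ℝ) < 1 - r := by linarith
  have hu : ∀ k : ℕ, 0 ≤ x * ρ ^ k ∧ x * ρ ^ k ≤ r := by
    intro k
    constructor
    · positivity
    · calc x * ρ ^ k ≤ x * 1 := by
            exact mul_le_mul_of_nonneg_left (pow_le_one₀ hρ0 hρ.le) hx
      _ ≤ r := by linarith
  have h2 : Real.exp (-(r / (1 - ρ)) / (1 - r))
      ≤ Real.exp (-(∑ k ∈ range n, x * ρ ^ k) / (1 - r)) := by
    rw [Real.exp_le_exp]
    have hsum : ∑ k ∈ range n, x * ρ ^ k ≤ r / (1 - ρ) := by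
      rw [← Finset.mul_sum, div_eq_mul_inv]
      calc x * ∑ k ∈ range n, ρ ^ k ≤ x * (1 - ρ)⁻¹ :=
            mul_le_mul_of_nonneg_left (geom_sum_le_inv hρ0 hρ n) hx
      _ ≤ r * (1 - ρ)⁻¹ := by
            have h9 : (0:ℝ) ≤ (1 - ρ)⁻¹ := by
              have : (0:ℝ) < 1 - ρ := by linarith
              positivity
            exact mul_le_mul_of_nonneg_right hxr h9
    rw [div_le_div_iff₀ h1r h1r]
    nlinarith
  refine h2.trans ?_
  have h3 : Real.exp (-(∑ k ∈ range n, x * ρ ^ k) / (1 - r))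
      = ∏ k ∈ range n, Real.exp (-(x * ρ ^ k / (1 - r))) := by
    rw [← Real.exp_sum]
    congr 1
    rw [← Finset.sum_neg_distrib, Finset.sum_div]
    exact Finset.sum_congr rfl (fun i _ => by rw [neg_div])
  rw [h3]
  refine Finset.prod_le_prod (fun i _ => (Real.exp_pos _).le) (fun i _ => ?_)
  exact exp_aux hr (hu i).1 (hu i).2

/-! ### Complex norm bounds for the q-products -/

lemma norm_one_sub_le (x : ℂ) : ‖(1:ℂ) - x‖ ≤ 1 + ‖x‖ :=
  (norm_sub_le _ _).trans (by rw [norm_one])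

lemma le_norm_one_sub (x : ℂ) : 1 - ‖x‖ ≤ ‖(1:ℂ) - x‖ := by
  simpa using norm_sub_norm_le (1:ℂ) x

lemma qPoch_norm_le {q : ℂ} (hq : ‖q‖ < 1) (x : ℂ) (n : ℕ) :
    ‖qPoch x q n‖ ≤ Real.exp (‖x‖ / (1 - ‖q‖)) := by
  have h1 : ‖qPoch x q n‖ ≤ ∏ k ∈ range n, (1 + ‖x‖ * ‖q‖ ^ k) := by
    rw [qPoch, norm_prod]
    refine Finset.prod_le_prod (fun i _ => norm_nonneg _) (fun i _ => ?_)
    calc ‖1 - x * q ^ i‖ ≤ 1 + ‖x * q ^ i‖ := norm_one_sub_le _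
    _ = 1 + ‖x‖ * ‖q‖ ^ i := by rw [norm_mul, norm_pow]
  exact h1.trans (core_upper (norm_nonneg x) (norm_nonneg q) hq n)

lemma le_qPoch_norm {q : ℂ} {r : ℝ} (hq : ‖q‖ < 1) (hr : r < 1) {x : ℂ} (hx : ‖x‖ ≤ r) (n : ℕ) :
    Real.exp (-(r / (1 - ‖q‖)) / (1 - r)) ≤ ‖qPoch x q n‖ := by
  have h1 : ∏ k ∈ range n, (1 - ‖x‖ * ‖q‖ ^ k) ≤ ‖qPoch x q n‖ := by
    rw [qPoch, norm_prod]
    refine Finset.prod_le_prod (fun i _ => ?_) (fun i _ => ?_)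
    · have hk : ‖x‖ * ‖q‖ ^ i ≤ r := by
        calc ‖x‖ * ‖q‖ ^ i ≤ r * 1 :=
          mul_le_mul hx (pow_le_one₀ (norm_nonneg q) hq.le) (by positivity) ((norm_nonneg x).trans hx)
        _ = r := mul_one r
      linarith
    · calc 1 - ‖x‖ * ‖q‖ ^ i = 1 - ‖x * q ^ i‖ := by rw [norm_mul, norm_pow]
      _ ≤ ‖1 - x * q ^ i‖ := le_norm_one_sub _
  exact (core_lower ((norm_nonneg x).trans hx |> fun h => norm_nonneg x) hx hr
    (norm_nonneg q) hq n).trans h1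

lemma qPoch_ne_zero {q : ℂ} {r : ℝ} (hq : ‖q‖ < 1) (hr : r < 1) {x : ℂ} (hx : ‖x‖ ≤ r) (n : ℕ) :
    qPoch x q n ≠ 0 := by
  have := (Real.exp_pos (-(r / (1 - ‖q‖)) / (1 - r))).trans_le (le_qPoch_norm hq hr hx n)
  exact fun h => by simp [h] at this

lemma one_sub_ne_zero {x : ℂ} (hx : ‖x‖ < 1) : (1:ℂ) - x ≠ 0 := by
  have := le_norm_one_sub x
  intro h
  rw [h, norm_zero] at this
  linarith

lemma qPoch_succ_left (x q : ℂ) (n : ℕ) :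
    qPoch x q (n + 1) = qPoch (x * q) q n * (1 - x) := by
  rw [qPoch, Finset.prod_range_succ', qPoch]
  congr 1
  · exact Finset.prod_congr rfl (fun k _ => by ring_nf)
  · simp

lemma qPoch_succ (x q : ℂ) (n : ℕ) :
    qPoch x q (n + 1) = qPoch x q n * (1 - x * q ^ n) := by
  rw [qPoch, Finset.prod_range_succ, qPoch]

/-! ### the two term sequences -/

noncomputable def aT (q z c : ℂ) (n : ℕ) : ℂ :=
  qPoch q q n * z ^ (n + 1) * q ^ (n + 1) /
    ((1 - c * q ^ (n + 1)) * qPoch (z * q) q (n + 1))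

noncomputable def bT (q z c : ℂ) (n : ℕ) : ℂ :=
  z * q ^ (n + 1) * (∏ k ∈ Finset.Icc 1 n, (c - z * q ^ k)) /
    (qPoch (z * q) q (n + 1) * (1 - z * q ^ (n + 1)))

lemma prodc_norm_le {q c : ℂ} (hq : ‖q‖ < 1) (hc : ‖c‖ ≤ 1) {w : ℂ} {r : ℝ}
    (hw : ‖w * q‖ ≤ r) (n : ℕ) :
    ‖∏ k ∈ Icc 1 n, (c - w * q ^ k)‖ ≤ Real.exp (r / (1 - ‖q‖)) := by
  have key : ∀ m : ℕ, ‖∏ k ∈ Icc 1 m, (c - w * q ^ k)‖ ≤ ∏ j ∈ range m, (1 + ‖w * q‖ * ‖q‖ ^ j) := by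
    intro m
    induction m with
    | zero => simp
    | succ m ih =>
      rw [Finset.prod_Icc_succ_top (by omega), Finset.prod_range_succ, norm_mul]
      refine mul_le_mul ih ?_ (norm_nonneg _) ?_
      · calc ‖c - w * q ^ (m+1)‖ ≤ ‖c‖ + ‖w * q ^ (m+1)‖ := norm_sub_le _ _
        _ ≤ 1 + ‖w * q‖ * ‖q‖ ^ m := by
            have : ‖w * q ^ (m+1)‖ = ‖w * q‖ * ‖q‖ ^ m := by
              rw [show w * q ^ (m+1) = (w * q) * q ^ m by ring, norm_mul, norm_pow]
            rw [this]
            exact add_le_add hc le_rfl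
      · refine Finset.prod_nonneg (fun i _ => ?_)
        positivity
  refine (key n).trans ?_
  have h2 : ∏ j ∈ range n, (1 + ‖w * q‖ * ‖q‖ ^ j) ≤ Real.exp (‖w * q‖ / (1 - ‖q‖)) :=
    core_upper (norm_nonneg _) (norm_nonneg q) hq n
  refine h2.trans ?_
  rw [Real.exp_le_exp]
  have h3 : (0:ℝ) < 1 - ‖q‖ := by linarith
  gcongr
/-! ### term bounds and summability -/

lemma aT_norm_le {q c w : ℂ} {r : ℝ} (hq : ‖q‖ < 1) (hc : ‖c‖ ≤ 1) (hr : r < 1)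
    (hw : ‖w * q‖ ≤ r) (n : ℕ) :
    ‖aT q w c n‖ ≤ Real.exp (‖q‖ / (1 - ‖q‖)) / ((1 - ‖q‖) * Real.exp (-(r / (1 - ‖q‖)) / (1 - r)))
      * (‖w * q‖ * r ^ n) := by
  have hq1 : (0:ℝ) < 1 - ‖q‖ := by linarith
  have hr0 : 0 ≤ r := (norm_nonneg _).trans hw
  have hnum : ‖qPoch q q n * w ^ (n+1) * q ^ (n+1)‖
      ≤ Real.exp (‖q‖ / (1 - ‖q‖)) * (‖w * q‖ * r ^ n) := by
    rw [show qPoch q q n * w ^ (n+1) * q ^ (n+1) = qPoch q q n * (w * q) ^ (n+1) by ring,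
      norm_mul, norm_pow]
    refine mul_le_mul (qPoch_norm_le hq q n) ?_ (by positivity) (Real.exp_pos _).le
    rw [pow_succ']
    exact mul_le_mul_of_nonneg_left (pow_le_pow_left₀ (norm_nonneg _) hw n) (norm_nonneg _)
  have hden : (1 - ‖q‖) * Real.exp (-(r / (1 - ‖q‖)) / (1 - r))
      ≤ ‖(1 - c * q ^ (n+1)) * qPoch (w * q) q (n+1)‖ := by
    rw [norm_mul]
    refine mul_le_mul ?_ (le_qPoch_norm hq hr hw (n+1)) (Real.exp_pos _).le (norm_nonneg _)
    have h2 : ‖c * q ^ (n+1)‖ ≤ ‖q‖ := by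
      rw [norm_mul, norm_pow]
      calc ‖c‖ * ‖q‖ ^ (n+1) ≤ 1 * ‖q‖ ^ (n+1) :=
        mul_le_mul_of_nonneg_right hc (by positivity)
      _ = ‖q‖ ^ (n+1) := one_mul _
      _ ≤ ‖q‖ ^ 1 := pow_le_pow_of_le_one (norm_nonneg q) hq.le (by omega)
      _ = ‖q‖ := pow_one _
    calc 1 - ‖q‖ ≤ 1 - ‖c * q ^ (n+1)‖ := by linarith
    _ ≤ ‖1 - c * q ^ (n+1)‖ := le_norm_one_sub _
  rw [aT, norm_div]
  calc ‖qPoch q q n * w ^ (n+1) * q ^ (n+1)‖ / ‖(1 - c * q ^ (n+1)) * qPoch (w * q) q (n+1)‖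
      ≤ (Real.exp (‖q‖ / (1 - ‖q‖)) * (‖w * q‖ * r ^ n)) /
        ((1 - ‖q‖) * Real.exp (-(r / (1 - ‖q‖)) / (1 - r))) :=
        div_le_div₀ (by positivity) hnum (by positivity) hden
  _ = _ := by ring

lemma bT_norm_le {q c w : ℂ} {r : ℝ} (hq : ‖q‖ < 1) (hc : ‖c‖ ≤ 1) (hr : r < 1)
    (hw : ‖w * q‖ ≤ r) (n : ℕ) :
    ‖bT q w c n‖ ≤ Real.exp (r / (1 - ‖q‖)) / (Real.exp (-(r / (1 - ‖q‖)) / (1 - r)) * (1 - r))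
      * (‖w * q‖ * ‖q‖ ^ n) := by
  have hr0 : 0 ≤ r := (norm_nonneg _).trans hw
  have hwqn : ∀ m : ℕ, ‖w * q ^ (m+1)‖ = ‖w * q‖ * ‖q‖ ^ m := by
    intro m
    rw [show w * q ^ (m+1) = (w * q) * q ^ m by ring, norm_mul, norm_pow]
  have hnum : ‖w * q ^ (n+1) * (∏ k ∈ Icc 1 n, (c - w * q ^ k))‖
      ≤ Real.exp (r / (1 - ‖q‖)) * (‖w * q‖ * ‖q‖ ^ n) := by
    rw [norm_mul, hwqn n]
    calc ‖w * q‖ * ‖q‖ ^ n * ‖∏ k ∈ Icc 1 n, (c - w * q ^ k)‖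
        ≤ ‖w * q‖ * ‖q‖ ^ n * Real.exp (r / (1 - ‖q‖)) :=
          mul_le_mul_of_nonneg_left (prodc_norm_le hq hc hw n) (by positivity)
    _ = _ := by ring
  have hden : Real.exp (-(r / (1 - ‖q‖)) / (1 - r)) * (1 - r)
      ≤ ‖qPoch (w * q) q (n+1) * (1 - w * q ^ (n+1))‖ := by
    rw [norm_mul]
    refine mul_le_mul (le_qPoch_norm hq hr hw (n+1)) ?_ (by linarith) (norm_nonneg _)
    have h2 : ‖w * q ^ (n+1)‖ ≤ r := by
      rw [hwqn n]
      calc ‖w * q‖ * ‖q‖ ^ n ≤ r * 1 :=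
        mul_le_mul hw (pow_le_one₀ (norm_nonneg q) hq.le) (by positivity) hr0
      _ = r := mul_one r
    calc 1 - r ≤ 1 - ‖w * q ^ (n+1)‖ := by linarith
    _ ≤ ‖1 - w * q ^ (n+1)‖ := le_norm_one_sub _
  rw [bT, norm_div]
  calc _ ≤ (Real.exp (r / (1 - ‖q‖)) * (‖w * q‖ * ‖q‖ ^ n)) /
        (Real.exp (-(r / (1 - ‖q‖)) / (1 - r)) * (1 - r)) :=
        div_le_div₀ (by positivity) hnum (mul_pos (Real.exp_pos _) (by linarith)) hden
  _ = _ := by ring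

lemma summable_aT {q c w : ℂ} (hq : ‖q‖ < 1) (hc : ‖c‖ ≤ 1) (hw : ‖w * q‖ < 1) :
    Summable (aT q w c) := by
  refine Summable.of_norm_bounded ?_ (aT_norm_le hq hc hw le_rfl)
  have := (summable_geometric_of_lt_one (norm_nonneg (w*q)) hw).mul_left
    (Real.exp (‖q‖ / (1 - ‖q‖)) / ((1 - ‖q‖) * Real.exp (-(‖w * q‖ / (1 - ‖q‖)) / (1 - ‖w * q‖)))
      * ‖w * q‖)
  exact this.congr (fun n => by ring)

lemma summable_bT {q c w : ℂ} (hq : ‖q‖ < 1) (hc : ‖c‖ ≤ 1) (hw : ‖w * q‖ < 1) :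
    Summable (bT q w c) := by
  refine Summable.of_norm_bounded ?_ (bT_norm_le hq hc hw le_rfl)
  have := (summable_geometric_of_lt_one (norm_nonneg q) hq).mul_left
    (Real.exp (‖w * q‖ / (1 - ‖q‖)) /
      (Real.exp (-(‖w * q‖ / (1 - ‖q‖)) / (1 - ‖w * q‖)) * (1 - ‖w * q‖)) * ‖w * q‖)
  exact this.congr (fun n => by ring)

lemma tsum_aT_norm_le {q c w : ℂ} {r : ℝ} (hq : ‖q‖ < 1) (hc : ‖c‖ ≤ 1) (hr : r < 1)
    (hw : ‖w * q‖ ≤ r) :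
    ‖∑' n, aT q w c n‖ ≤ Real.exp (‖q‖ / (1 - ‖q‖)) /
      ((1 - ‖q‖) * Real.exp (-(r / (1 - ‖q‖)) / (1 - r))) * (1 - r)⁻¹ * ‖w * q‖ := by
  have hr0 : 0 ≤ r := (norm_nonneg _).trans hw
  set K := Real.exp (‖q‖ / (1 - ‖q‖)) / ((1 - ‖q‖) * Real.exp (-(r / (1 - ‖q‖)) / (1 - r))) with hK
  have hsg : Summable (fun n : ℕ => K * (‖w * q‖ * r ^ n)) := by
    have := (summable_geometric_of_lt_one hr0 hr).mul_left (K * ‖w * q‖)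
    exact this.congr (fun n => by ring)
  have hsn : Summable (fun n => ‖aT q w c n‖) :=
    Summable.of_nonneg_of_le (fun n => norm_nonneg _) (aT_norm_le hq hc hr hw) hsg
  calc ‖∑' n, aT q w c n‖ ≤ ∑' n, ‖aT q w c n‖ := norm_tsum_le_tsum_norm hsn
  _ ≤ ∑' n : ℕ, K * (‖w * q‖ * r ^ n) := Summable.tsum_le_tsum (aT_norm_le hq hc hr hw) hsn hsg
  _ = (K * ‖w * q‖) * ∑' n : ℕ, r ^ n := by
      rw [← tsum_mul_left]
      exact tsum_congr (fun n => by ring)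
  _ = _ := by rw [tsum_geometric_of_lt_one hr0 hr]; ring

lemma tsum_bT_norm_le {q c w : ℂ} {r : ℝ} (hq : ‖q‖ < 1) (hc : ‖c‖ ≤ 1) (hr : r < 1)
    (hw : ‖w * q‖ ≤ r) :
    ‖∑' n, bT q w c n‖ ≤ Real.exp (r / (1 - ‖q‖)) /
      (Real.exp (-(r / (1 - ‖q‖)) / (1 - r)) * (1 - r)) * (1 - ‖q‖)⁻¹ * ‖w * q‖ := by
  have hr0 : 0 ≤ r := (norm_nonneg _).trans hw
  set K := Real.exp (r / (1 - ‖q‖)) / (Real.exp (-(r / (1 - ‖q‖)) / (1 - r)) * (1 - r)) with hK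
  have hsg : Summable (fun n : ℕ => K * (‖w * q‖ * ‖q‖ ^ n)) := by
    have := (summable_geometric_of_lt_one (norm_nonneg q) hq).mul_left (K * ‖w * q‖)
    exact this.congr (fun n => by ring)
  have hsn : Summable (fun n => ‖bT q w c n‖) :=
    Summable.of_nonneg_of_le (fun n => norm_nonneg _) (bT_norm_le hq hc hr hw) hsg
  calc ‖∑' n, bT q w c n‖ ≤ ∑' n, ‖bT q w c n‖ := norm_tsum_le_tsum_norm hsn
  _ ≤ ∑' n : ℕ, K * (‖w * q‖ * ‖q‖ ^ n) := Summable.tsum_le_tsum (bT_norm_le hq hc hr hw) hsn hsg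
  _ = (K * ‖w * q‖) * ∑' n : ℕ, ‖q‖ ^ n := by
      rw [← tsum_mul_left]
      exact tsum_congr (fun n => by ring)
  _ = _ := by rw [tsum_geometric_of_lt_one (norm_nonneg q) hq]; ring

/-! ### algebraic identities -/

lemma prodc_shift (q w c : ℂ) (n : ℕ) :
    (c - w * q) * ∏ k ∈ Icc 1 n, (c - w * q * q ^ k) = ∏ k ∈ Icc 1 (n + 1), (c - w * q ^ k) := by
  induction n with
  | zero =>
    rw [show Finset.Icc 1 0 = (∅ : Finset ℕ) from Finset.Icc_eq_empty (by omega),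
      Finset.prod_empty, Finset.Icc_self, Finset.prod_singleton, mul_one, pow_one]
  | succ m ih =>
    rw [Finset.prod_Icc_succ_top (f := fun k => c - w * q * q ^ k) (by omega),
      Finset.prod_Icc_succ_top (f := fun k => c - w * q ^ k) (by omega), ← ih]
    ring

lemma norm_wq_pow_lt {q w : ℂ} (hq : ‖q‖ < 1) (hw : ‖w * q‖ < 1) (m : ℕ) :
    ‖w * q * q ^ m‖ < 1 := by
  rw [norm_mul, norm_pow]
  calc ‖w * q‖ * ‖q‖ ^ m ≤ ‖w * q‖ * 1 :=
    mul_le_mul_of_nonneg_left (pow_le_one₀ (norm_nonneg q) hq.le) (norm_nonneg _)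
  _ = ‖w * q‖ := mul_one _
  _ < 1 := hw

lemma bT_succ {q c w : ℂ} {r : ℝ} (hq : ‖q‖ < 1) (hr : r < 1) (hw : ‖w * q‖ ≤ r) (n : ℕ) :
    bT q w c (n + 1) = (c - w * q) / (1 - w * q) * bT q (w * q) c n := by
  have hwq1 : ‖w * q‖ < 1 := hw.trans_lt hr
  have h1 : (1 : ℂ) - w * q ≠ 0 := one_sub_ne_zero hwq1
  have hwqq : ‖w * q * q‖ ≤ r := by
    rw [norm_mul]
    calc ‖w * q‖ * ‖q‖ ≤ ‖w * q‖ * 1 := mul_le_mul_of_nonneg_left hq.le (norm_nonneg _)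
    _ = ‖w * q‖ := mul_one _
    _ ≤ r := hw
  have hB : qPoch (w * q * q) q (n + 1) ≠ 0 := qPoch_ne_zero hq hr hwqq (n + 1)
  have h3 : (1 : ℂ) - w * q * q ^ (n + 1) ≠ 0 := one_sub_ne_zero (norm_wq_pow_lt hq hwq1 (n + 1))
  have h4 : (1 : ℂ) - w * q ^ (n + 1 + 1) ≠ 0 := by
    rw [show w * q ^ (n + 1 + 1) = w * q * q ^ (n + 1) by ring]
    exact h3
  have rB : qPoch (w * q) q (n + 1 + 1) = qPoch (w * q * q) q (n + 1) * (1 - w * q) :=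
    qPoch_succ_left (w * q) q (n + 1)
  simp only [bT]
  rw [← prodc_shift, rB, div_mul_div_comm,
    div_eq_div_iff (mul_ne_zero (mul_ne_zero hB h1) h4) (mul_ne_zero h1 (mul_ne_zero hB h3))]
  ring

lemma aT_sub {q c w : ℂ} {r : ℝ} (hq : ‖q‖ < 1) (hc : ‖c‖ ≤ 1) (hr : r < 1)
    (hw : ‖w * q‖ ≤ r) (n : ℕ) :
    aT q w c n - (c - w * q) / (1 - w * q) * aT q (w * q) c n
      = qPoch q q n * (w * q) ^ (n + 1) / qPoch (w * q) q (n + 1 + 1) := by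
  have hwq1 : ‖w * q‖ < 1 := hw.trans_lt hr
  have h1 : (1 : ℂ) - w * q ≠ 0 := one_sub_ne_zero hwq1
  have hwqq : ‖w * q * q‖ ≤ r := by
    rw [norm_mul]
    calc ‖w * q‖ * ‖q‖ ≤ ‖w * q‖ * 1 := mul_le_mul_of_nonneg_left hq.le (norm_nonneg _)
    _ = ‖w * q‖ := mul_one _
    _ ≤ r := hw
  have hB : qPoch (w * q * q) q (n + 1) ≠ 0 := qPoch_ne_zero hq hr hwqq (n + 1)
  have hP : qPoch (w * q) q (n + 1) ≠ 0 := qPoch_ne_zero hq hr hw (n + 1)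
  have h3 : (1 : ℂ) - w * q * q ^ (n + 1) ≠ 0 := one_sub_ne_zero (norm_wq_pow_lt hq hwq1 (n + 1))
  have hcq : (1 : ℂ) - c * q ^ (n + 1) ≠ 0 := by
    refine one_sub_ne_zero ?_
    rw [norm_mul, norm_pow]
    calc ‖c‖ * ‖q‖ ^ (n + 1) ≤ 1 * ‖q‖ ^ (n + 1) :=
      mul_le_mul_of_nonneg_right hc (by positivity)
    _ = ‖q‖ ^ (n + 1) := one_mul _
    _ < 1 := pow_lt_one₀ (norm_nonneg q) hq (by omega)
  have hrel : qPoch (w * q * q) q (n + 1) * (1 - w * q)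
      = qPoch (w * q) q (n + 1) * (1 - w * q * q ^ (n + 1)) := by
    rw [← qPoch_succ_left (w * q) q (n + 1)]
    exact qPoch_succ (w * q) q (n + 1)
  have hA2 : aT q (w * q) c n
      = qPoch q q n * (w * q) ^ (n + 1) * q ^ (n + 1) * (1 - w * q) /
        ((1 - c * q ^ (n + 1)) * (qPoch (w * q) q (n + 1) * (1 - w * q * q ^ (n + 1)))) := by
    simp only [aT]
    rw [div_eq_div_iff (mul_ne_zero hcq hB) (mul_ne_zero hcq (mul_ne_zero hP h3))]
    linear_combination (-(qPoch q q n * (w * q) ^ (n + 1) * q ^ (n + 1))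
      * (1 - c * q ^ (n + 1))) * hrel
  rw [hA2]
  simp only [aT]
  rw [qPoch_succ (w * q) q (n + 1), div_mul_div_comm,
    div_sub_div _ _ (mul_ne_zero hcq hP)
      (mul_ne_zero h1 (mul_ne_zero hcq (mul_ne_zero hP h3))),
    div_eq_div_iff
      (mul_ne_zero (mul_ne_zero hcq hP)
        (mul_ne_zero h1 (mul_ne_zero hcq (mul_ne_zero hP h3))))
      (mul_ne_zero hP h3)]
  ring

lemma g_eq {q w : ℂ} {r : ℝ} (hq : ‖q‖ < 1) (hr : r < 1) (hw : ‖w * q‖ ≤ r) (n : ℕ) :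
    qPoch q q n * (w * q) ^ (n + 1) / qPoch (w * q) q (n + 1 + 1)
      = qPoch q q n * (w * q) ^ (n + 1) / ((1 - w * q) * qPoch (w * q) q (n + 1))
        - qPoch q q (n + 1) * (w * q) ^ (n + 1 + 1) / ((1 - w * q) * qPoch (w * q) q (n + 1 + 1)) := by
  have hwq1 : ‖w * q‖ < 1 := hw.trans_lt hr
  have h1 : (1 : ℂ) - w * q ≠ 0 := one_sub_ne_zero hwq1
  have hP : qPoch (w * q) q (n + 1) ≠ 0 := qPoch_ne_zero hq hr hw (n + 1)
  have h3 : (1 : ℂ) - w * q * q ^ (n + 1) ≠ 0 := one_sub_ne_zero (norm_wq_pow_lt hq hwq1 (n + 1))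
  rw [qPoch_succ (w * q) q (n + 1), qPoch_succ q q n,
    div_sub_div _ _ (mul_ne_zero h1 hP) (mul_ne_zero h1 (mul_ne_zero hP h3)),
    div_eq_div_iff (mul_ne_zero hP h3)
      (mul_ne_zero (mul_ne_zero h1 hP) (mul_ne_zero h1 (mul_ne_zero hP h3)))]
  ring

lemma tsum_g {q w : ℂ} (hq : ‖q‖ < 1) (hw : ‖w * q‖ < 1) :
    ∑' n : ℕ, qPoch q q n * (w * q) ^ (n + 1) / qPoch (w * q) q (n + 1 + 1)
      = w * q / (1 - w * q) ^ 2 := by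
  set g : ℕ → ℂ := fun n => qPoch q q n * (w * q) ^ (n + 1) / qPoch (w * q) q (n + 1 + 1) with hg
  set G : ℕ → ℂ :=
    fun n => qPoch q q n * (w * q) ^ (n + 1) / ((1 - w * q) * qPoch (w * q) q (n + 1)) with hGdef
  set r : ℝ := ‖w * q‖ with hrdef
  have hr0 : 0 ≤ r := norm_nonneg _
  have hδ : (0:ℝ) < Real.exp (-(r / (1 - ‖q‖)) / (1 - r)) := Real.exp_pos _
  have hsum : Summable g := by
    refine Summable.of_norm_bounded
      (g := fun n => (Real.exp (‖q‖ / (1 - ‖q‖)) / Real.exp (-(r / (1 - ‖q‖)) / (1 - r)) * ‖w * q‖)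
        * ‖w * q‖ ^ n) ((summable_geometric_of_lt_one (norm_nonneg _) hw).mul_left _) ?_
    intro n
    rw [hg]
    simp only
    rw [norm_div, norm_mul, norm_pow]
    calc ‖qPoch q q n‖ * ‖w * q‖ ^ (n + 1) / ‖qPoch (w * q) q (n + 1 + 1)‖
        ≤ Real.exp (‖q‖ / (1 - ‖q‖)) * ‖w * q‖ ^ (n + 1)
          / Real.exp (-(r / (1 - ‖q‖)) / (1 - r)) := by
          refine div_le_div₀ (by positivity) ?_ hδ (le_qPoch_norm hq hw le_rfl _)
          exact mul_le_mul_of_nonneg_right (qPoch_norm_le hq q n) (by positivity)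
    _ = _ := by rw [pow_succ']; ring
  have hpart : ∀ N, ∑ i ∈ range N, g i = G 0 - G N := by
    intro N
    rw [show ∑ i ∈ range N, g i = ∑ i ∈ range N, (G i - G (i + 1)) from
      Finset.sum_congr rfl (fun i _ => g_eq hq hw le_rfl i), Finset.sum_range_sub']
  have hG0 : G 0 = w * q / (1 - w * q) ^ 2 := by
    rw [hGdef]
    simp only
    have e1 : qPoch q q 0 = 1 := by simp [qPoch]
    have e2 : qPoch (w * q) q 1 = 1 - w * q := by
      rw [qPoch, Finset.prod_range_one, pow_zero, mul_one]
    rw [e1, e2, pow_one, one_mul, pow_two]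
  have hGlim : Filter.Tendsto G Filter.atTop (nhds 0) := by
    refine squeeze_zero_norm
      (a := fun N => (Real.exp (‖q‖ / (1 - ‖q‖)) / ((1 - r) * Real.exp (-(r / (1 - ‖q‖)) / (1 - r)))
        * ‖w * q‖) * ‖w * q‖ ^ N) ?_ ?_
    · intro N
      rw [hGdef]
      simp only
      rw [norm_div, norm_mul, norm_mul, norm_pow]
      have h1r : (0:ℝ) < 1 - r := by linarith
      have lb : (1 - r) * Real.exp (-(r / (1 - ‖q‖)) / (1 - r))
          ≤ ‖1 - w * q‖ * ‖qPoch (w * q) q (N + 1)‖ := by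
        refine mul_le_mul ?_ (le_qPoch_norm hq hw le_rfl _) hδ.le (norm_nonneg _)
        exact le_norm_one_sub _
      calc ‖qPoch q q N‖ * ‖w * q‖ ^ (N + 1) / (‖1 - w * q‖ * ‖qPoch (w * q) q (N + 1)‖)
          ≤ Real.exp (‖q‖ / (1 - ‖q‖)) * ‖w * q‖ ^ (N + 1)
            / ((1 - r) * Real.exp (-(r / (1 - ‖q‖)) / (1 - r))) := by
            refine div_le_div₀ (by positivity) ?_ (mul_pos h1r hδ) lb
            exact mul_le_mul_of_nonneg_right (qPoch_norm_le hq q N) (by positivity)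
      _ = _ := by rw [pow_succ']; ring
    · have h0 := tendsto_pow_atTop_nhds_zero_of_lt_one (norm_nonneg (w * q)) hw
      have h6 := h0.const_mul (Real.exp (‖q‖ / (1 - ‖q‖))
        / ((1 - r) * Real.exp (-(r / (1 - ‖q‖)) / (1 - r))) * ‖w * q‖)
      simpa using h6
  have h2 : Filter.Tendsto (fun N => ∑ i ∈ range N, g i) Filter.atTop (nhds (G 0 - 0)) := by
    simp only [hpart]
    exact Filter.Tendsto.const_sub _ hGlim
  have h3 := hsum.hasSum.tendsto_sum_nat
  have h4 := tendsto_nhds_unique h3 h2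
  rw [hg] at h4
  rw [h4, hG0, sub_zero]

lemma FE_b {q c w : ℂ} (hq : ‖q‖ < 1) (hc : ‖c‖ ≤ 1) (hw : ‖w * q‖ < 1) :
    ∑' n, bT q w c n
      = w * q / (1 - w * q) ^ 2 + (c - w * q) / (1 - w * q) * ∑' n, bT q (w * q) c n := by
  have hs := summable_bT hq hc hw
  rw [Summable.tsum_eq_zero_add hs]
  congr 1
  · show bT q w c 0 = w * q / (1 - w * q) ^ 2
    rw [show bT q w c 0 = w * q ^ 1 * (∏ k ∈ Finset.Icc 1 0, (c - w * q ^ k)) /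
        (qPoch (w * q) q 1 * (1 - w * q ^ 1)) from rfl,
      show Finset.Icc 1 0 = (∅ : Finset ℕ) from Finset.Icc_eq_empty (by omega),
      Finset.prod_empty, mul_one, pow_one]
    rw [show qPoch (w * q) q 1 = 1 - w * q from by
      rw [qPoch, Finset.prod_range_one, pow_zero, mul_one], pow_two]
  · rw [← tsum_mul_left]
    exact tsum_congr (fun n => bT_succ hq hw le_rfl n)

lemma FE_a {q c w : ℂ} (hq : ‖q‖ < 1) (hc : ‖c‖ ≤ 1) (hw : ‖w * q‖ < 1) :
    ∑' n, aT q w c n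
      = w * q / (1 - w * q) ^ 2 + (c - w * q) / (1 - w * q) * ∑' n, aT q (w * q) c n := by
  have hs1 := summable_aT hq hc hw
  have hw2 : ‖w * q * q‖ < 1 := by
    rw [norm_mul]
    calc ‖w * q‖ * ‖q‖ ≤ ‖w * q‖ * 1 := mul_le_mul_of_nonneg_left hq.le (norm_nonneg _)
    _ = ‖w * q‖ := mul_one _
    _ < 1 := hw
  have hs2 := summable_aT (w := w * q) hq hc hw2
  have key : ∑' n, aT q w c n - (c - w * q) / (1 - w * q) * ∑' n, aT q (w * q) c n
      = ∑' n : ℕ, qPoch q q n * (w * q) ^ (n + 1) / qPoch (w * q) q (n + 1 + 1) := by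
    rw [← tsum_mul_left, ← Summable.tsum_sub hs1 (hs2.mul_left _)]
    exact tsum_congr (fun n => aT_sub hq hc hw le_rfl n)
  rw [tsum_g hq hw] at key
  exact sub_eq_iff_eq_add.mp key

end Stmt15


open Stmt15

/-- Theorem 2.13: for |q| < 1, |zq| < 1, |c| ≤ 1,
∑_{n≥1} (q;q)_{n−1} z^n q^n/((1 − c q^n)(zq;q)_n)
  = ∑_{n≥1} z q^n ∏_{k=1}^{n-1}(c − z q^k)/((zq;q)_n (1 − z q^n)). -/
theorem stmt15 (q z c : ℂ) (hq : ‖q‖ < 1) (hzq : ‖z * q‖ < 1)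
    (hc : ‖c‖ ≤ 1) :
    ∑' n : ℕ, qPoch q q n * z ^ (n + 1) * q ^ (n + 1) /
        ((1 - c * q ^ (n + 1)) * qPoch (z * q) q (n + 1)) =
      ∑' n : ℕ, z * q ^ (n + 1) * (∏ k ∈ Finset.Icc 1 n, (c - z * q ^ k)) /
        (qPoch (z * q) q (n + 1) * (1 - z * q ^ (n + 1))) := by
  show (∑' n, aT q z c n) = ∑' n, bT q z c n
  set r : ℝ := ‖z * q‖ with hrdef
  have hr1 : r < 1 := hzq
  have hr0 : 0 ≤ r := norm_nonneg _
  have hq1 : (0:ℝ) < 1 - ‖q‖ := by linarith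
  have h1r : (0:ℝ) < 1 - r := by linarith
  have hδ : (0:ℝ) < Real.exp (-(r / (1 - ‖q‖)) / (1 - r)) := Real.exp_pos _
  set D : ℂ → ℂ := fun w => (∑' n, aT q w c n) - ∑' n, bT q w c n with hD
  have hDap : ∀ w, D w = (∑' n, aT q w c n) - ∑' n, bT q w c n := fun w => rfl
  have hFE : ∀ w : ℂ, ‖w * q‖ < 1 → D w = (c - w * q) / (1 - w * q) * D (w * q) := by
    intro w hw
    rw [hDap, hDap, FE_a hq hc hw, FE_b hq hc hw]
    ring
  have horb : ∀ N : ℕ, ‖z * q ^ N * q‖ ≤ r := by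
    intro N
    rw [show z * q ^ N * q = (z * q) * q ^ N by ring, norm_mul, norm_pow]
    calc ‖z * q‖ * ‖q‖ ^ N ≤ ‖z * q‖ * 1 :=
      mul_le_mul_of_nonneg_left (pow_le_one₀ (norm_nonneg q) hq.le) (norm_nonneg _)
    _ = r := by rw [mul_one]
  have horb' : ∀ N, ‖z * q ^ N * q‖ < 1 := fun N => (horb N).trans_lt hr1
  have key : ∀ N : ℕ, D z
      = (∏ i ∈ range N, ((c - z * q ^ (i + 1)) / (1 - z * q ^ (i + 1)))) * D (z * q ^ N) := by
    intro N
    induction N with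
    | zero =>
      rw [Finset.range_zero, Finset.prod_empty, one_mul, pow_zero, mul_one]
    | succ N ih =>
      rw [ih, hFE (z * q ^ N) (horb' N), show z * q ^ N * q = z * q ^ (N + 1) by ring,
        Finset.prod_range_succ]
      ring
  set KA : ℝ := Real.exp (‖q‖ / (1 - ‖q‖)) /
    ((1 - ‖q‖) * Real.exp (-(r / (1 - ‖q‖)) / (1 - r))) * (1 - r)⁻¹ with hKA
  set KB : ℝ := Real.exp (r / (1 - ‖q‖)) /
    (Real.exp (-(r / (1 - ‖q‖)) / (1 - r)) * (1 - r)) * (1 - ‖q‖)⁻¹ with hKB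
  have hDbound : ∀ N : ℕ, ‖D (z * q ^ N)‖ ≤ (KA + KB) * (r * ‖q‖ ^ N) := by
    intro N
    have e : ‖z * q ^ N * q‖ = r * ‖q‖ ^ N := by
      rw [show z * q ^ N * q = (z * q) * q ^ N by ring, norm_mul, norm_pow]
    rw [hDap]
    calc ‖(∑' n, aT q (z * q ^ N) c n) - ∑' n, bT q (z * q ^ N) c n‖
        ≤ ‖∑' n, aT q (z * q ^ N) c n‖ + ‖∑' n, bT q (z * q ^ N) c n‖ := norm_sub_le _ _
    _ ≤ KA * ‖z * q ^ N * q‖ + KB * ‖z * q ^ N * q‖ :=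
        add_le_add (tsum_aT_norm_le hq hc hr1 (horb N)) (tsum_bT_norm_le hq hc hr1 (horb N))
    _ = (KA + KB) * (r * ‖q‖ ^ N) := by rw [e]; ring
  have hPbound : ∀ N : ℕ, ‖∏ i ∈ range N, ((c - z * q ^ (i + 1)) / (1 - z * q ^ (i + 1)))‖
      ≤ Real.exp (r / (1 - ‖q‖)) / Real.exp (-(r / (1 - ‖q‖)) / (1 - r)) := by
    intro N
    have enorm : ∀ i : ℕ, ‖z * q ^ (i + 1)‖ = r * ‖q‖ ^ i := by
      intro i
      rw [show z * q ^ (i + 1) = (z * q) * q ^ i by ring, norm_mul, norm_pow]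
    rw [norm_prod]
    have step1 : ∏ i ∈ range N, ‖(c - z * q ^ (i + 1)) / (1 - z * q ^ (i + 1))‖
        = (∏ i ∈ range N, ‖c - z * q ^ (i + 1)‖) / ∏ i ∈ range N, ‖1 - z * q ^ (i + 1)‖ := by
      rw [← Finset.prod_div_distrib]
      exact Finset.prod_congr rfl (fun i _ => norm_div _ _)
    rw [step1]
    have hnum : ∏ i ∈ range N, ‖c - z * q ^ (i + 1)‖ ≤ Real.exp (r / (1 - ‖q‖)) := by
      refine le_trans ?_ (core_upper hr0 (norm_nonneg q) hq N)
      refine Finset.prod_le_prod (fun i _ => norm_nonneg _) (fun i _ => ?_)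
      calc ‖c - z * q ^ (i + 1)‖ ≤ ‖c‖ + ‖z * q ^ (i + 1)‖ := norm_sub_le _ _
      _ ≤ 1 + r * ‖q‖ ^ i := by rw [enorm i]; exact add_le_add hc le_rfl
    have hden : Real.exp (-(r / (1 - ‖q‖)) / (1 - r)) ≤ ∏ i ∈ range N, ‖1 - z * q ^ (i + 1)‖ := by
      refine le_trans (core_lower hr0 le_rfl hr1 (norm_nonneg q) hq N) ?_
      refine Finset.prod_le_prod (fun i _ => ?_) (fun i _ => ?_)
      · have : r * ‖q‖ ^ i ≤ r * 1 :=
          mul_le_mul_of_nonneg_left (pow_le_one₀ (norm_nonneg q) hq.le) hr0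
        nlinarith
      · calc 1 - r * ‖q‖ ^ i = 1 - ‖z * q ^ (i + 1)‖ := by rw [enorm i]
        _ ≤ ‖1 - z * q ^ (i + 1)‖ := le_norm_one_sub _
    exact div_le_div₀ (Real.exp_pos _).le hnum hδ hden
  have hsq : ∀ N : ℕ, ‖D z‖ ≤ (Real.exp (r / (1 - ‖q‖)) / Real.exp (-(r / (1 - ‖q‖)) / (1 - r)))
      * ((KA + KB) * (r * ‖q‖ ^ N)) := by
    intro N
    rw [key N, norm_mul]
    refine mul_le_mul (hPbound N) (hDbound N) (norm_nonneg _) (by positivity)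
  have hlim : Filter.Tendsto (fun N : ℕ =>
      (Real.exp (r / (1 - ‖q‖)) / Real.exp (-(r / (1 - ‖q‖)) / (1 - r)))
      * ((KA + KB) * (r * ‖q‖ ^ N))) Filter.atTop (nhds 0) := by
    have h0 := tendsto_pow_atTop_nhds_zero_of_lt_one (norm_nonneg q) hq
    have h1 := h0.const_mul ((Real.exp (r / (1 - ‖q‖)) / Real.exp (-(r / (1 - ‖q‖)) / (1 - r)))
      * ((KA + KB) * r))
    rw [mul_zero] at h1
    exact h1.congr (fun N => by ring)
  have hle : ‖D z‖ ≤ 0 := ge_of_tendsto' hlim hsq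
  have hz0 : D z = 0 := norm_le_zero_iff.mp hle
  rw [hDap] at hz0
  exact sub_eq_zero.mp hz0
end

section
/- Let q, z be complex numbers with |q| < 1 and |z| ≤ 1. Then ∑_{n=1}^{∞} (−1)^{n−1} z^n q^{n^2} / ((zq;q^2)_n (1 − z q^{2n})) = ∑_{n=1}^{∞} z^n q^{n(n+1)/2} (q;q)_{n−1} / (zq;q)_n. -/
open Finset Filter

noncomputable def fTerm (q w : ℂ) (n : ℕ) : ℂ :=
  (-1) ^ n * w ^ (n + 1) * q ^ ((n + 1) ^ 2) /
    ((∏ k ∈ Finset.range (n + 1), (1 - w * q ^ (2 * k + 1))) * (1 - w * q ^ (2 * (n + 1))))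

noncomputable def gTerm (q w : ℂ) (n : ℕ) : ℂ :=
  w ^ (n + 1) * q ^ ((n + 1) * (n + 2) / 2) * qPoch q q n / qPoch (w * q) q (n + 1)

noncomputable def vTerm (q w : ℂ) (n : ℕ) : ℂ :=
  w ^ (n + 1) * q ^ ((n + 1) * (n + 2) / 2) * qPoch q q n / qPoch (w * q) q (n + 2)

lemma norm_wqk_le {q w : ℂ} (hq : ‖q‖ < 1) (hw : ‖w‖ ≤ 1) (k : ℕ) (hk : 1 ≤ k) :
    ‖w * q ^ k‖ ≤ ‖q‖ := by
  have h0 : (0:ℝ) ≤ ‖q‖ := norm_nonneg q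
  have h : ‖q‖ ^ k ≤ ‖q‖ ^ 1 := pow_le_pow_of_le_one h0 hq.le hk
  calc ‖w * q ^ k‖ = ‖w‖ * ‖q‖ ^ k := by rw [norm_mul, norm_pow]
    _ ≤ 1 * ‖q‖ ^ 1 := mul_le_mul hw h (by positivity) zero_le_one
    _ = ‖q‖ := by simp

lemma one_sub_ne {q w : ℂ} (hq : ‖q‖ < 1) (hw : ‖w‖ ≤ 1) (k : ℕ) (hk : 1 ≤ k) :
    (1 : ℂ) - w * q ^ k ≠ 0 := by
  intro h
  have h2 : w * q ^ k = 1 := by linear_combination -h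
  have h3 : ‖w * q ^ k‖ ≤ ‖q‖ := norm_wqk_le hq hw k hk
  rw [h2] at h3
  simp at h3
  exact absurd (lt_of_le_of_lt h3 hq) (lt_irrefl 1)

lemma norm_one_sub_ge {q w : ℂ} (hq : ‖q‖ < 1) (hw : ‖w‖ ≤ 1) (k : ℕ) (hk : 1 ≤ k) :
    1 - ‖q‖ ≤ ‖1 - w * q ^ k‖ := by
  have h1 : ‖w * q ^ k‖ ≤ ‖q‖ := norm_wqk_le hq hw k hk
  have h2 := norm_sub_norm_le (1 : ℂ) (w * q ^ k)
  rw [norm_one] at h2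
  linarith

lemma norm_one_sub_le {q w : ℂ} (hq : ‖q‖ < 1) (hw : ‖w‖ ≤ 1) (k : ℕ) (hk : 1 ≤ k) :
    ‖1 - w * q ^ k‖ ≤ 2 := by
  have h1 : ‖w * q ^ k‖ ≤ ‖q‖ := norm_wqk_le hq hw k hk
  have h2 := norm_sub_le (1 : ℂ) (w * q ^ k)
  rw [norm_one] at h2
  linarith
-- continuation: product bounds
lemma qPoch_wq_ne {q w : ℂ} (hq : ‖q‖ < 1) (hw : ‖w‖ ≤ 1) (n : ℕ) :
    qPoch (w * q) q n ≠ 0 := by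
  unfold qPoch
  apply Finset.prod_ne_zero_iff.mpr
  intro k _
  have : (1:ℂ) - w * q ^ (k+1) ≠ 0 := one_sub_ne hq hw (k+1) (by omega)
  intro h
  apply this
  rw [← h]; ring

lemma fProd_ne {q w : ℂ} (hq : ‖q‖ < 1) (hw : ‖w‖ ≤ 1) (n : ℕ) :
    (∏ k ∈ Finset.range n, (1 - w * q ^ (2 * k + 1))) ≠ 0 := by
  apply Finset.prod_ne_zero_iff.mpr
  intro k _
  exact one_sub_ne hq hw (2*k+1) (by omega)

lemma norm_qPoch_wq_ge {q w : ℂ} (hq : ‖q‖ < 1) (hw : ‖w‖ ≤ 1) (n : ℕ) :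
    (1 - ‖q‖) ^ n ≤ ‖qPoch (w * q) q n‖ := by
  unfold qPoch
  rw [norm_prod]
  have h := Finset.prod_le_prod (s := Finset.range n) (f := fun _ => 1 - ‖q‖)
    (g := fun k => ‖1 - w * q * q ^ k‖) (fun k _ => by show (0:ℝ) ≤ 1 - ‖q‖; linarith)
    (fun k _ => by
      show 1 - ‖q‖ ≤ ‖1 - w * q * q ^ k‖
      have hh : w * q * q ^ k = w * q ^ (k+1) := by ring
      rw [hh]
      exact norm_one_sub_ge hq hw (k+1) (by omega))
  simpa using h

lemma norm_fProd_ge {q w : ℂ} (hq : ‖q‖ < 1) (hw : ‖w‖ ≤ 1) (n : ℕ) :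
    (1 - ‖q‖) ^ n ≤ ‖∏ k ∈ Finset.range n, (1 - w * q ^ (2 * k + 1))‖ := by
  rw [norm_prod]
  have h := Finset.prod_le_prod (s := Finset.range n) (f := fun _ => 1 - ‖q‖)
    (g := fun k => ‖1 - w * q ^ (2*k+1)‖) (fun k _ => by show (0:ℝ) ≤ 1 - ‖q‖; linarith)
    (fun k _ => norm_one_sub_ge hq hw (2*k+1) (by omega))
  simpa using h

lemma norm_qPoch_q_le {q : ℂ} (hq : ‖q‖ < 1) (n : ℕ) :
    ‖qPoch q q n‖ ≤ 2 ^ n := by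
  unfold qPoch
  rw [norm_prod]
  calc ∏ k ∈ Finset.range n, ‖1 - q * q ^ k‖ ≤ ∏ _k ∈ Finset.range n, (2:ℝ) := by
        apply Finset.prod_le_prod
        · intro k _; exact norm_nonneg _
        · intro k _
          have : q * q ^ k = 1 * q ^ (k+1) := by ring
          rw [this]
          exact norm_one_sub_le hq (by norm_num) (k+1) (by omega)
    _ = 2 ^ n := by simp

-- norm bounds on terms
lemma norm_fTerm_le {q w : ℂ} (hq : ‖q‖ < 1) (hw : ‖w‖ ≤ 1) (n : ℕ) :
    ‖fTerm q w n‖ ≤ ‖q‖ ^ ((n+1)^2) / (1 - ‖q‖) ^ (n + 2) := by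
  have hq0 : (0:ℝ) < 1 - ‖q‖ := by linarith
  unfold fTerm
  rw [norm_div]
  have hnum : ‖(-1:ℂ) ^ n * w ^ (n + 1) * q ^ ((n + 1) ^ 2)‖ ≤ ‖q‖ ^ ((n+1)^2) := by
    rw [norm_mul, norm_mul, norm_pow, norm_pow, norm_pow, norm_neg, norm_one, one_pow, one_mul]
    have : ‖w‖ ^ (n+1) ≤ 1 := pow_le_one₀ (norm_nonneg w) hw
    calc ‖w‖ ^ (n+1) * ‖q‖ ^ ((n+1)^2) ≤ 1 * ‖q‖ ^ ((n+1)^2) := by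
          apply mul_le_mul_of_nonneg_right this (by positivity)
      _ = _ := one_mul _
  have hden : (1 - ‖q‖) ^ (n + 2) ≤
      ‖(∏ k ∈ Finset.range (n + 1), (1 - w * q ^ (2 * k + 1))) * (1 - w * q ^ (2 * (n + 1)))‖ := by
    rw [norm_mul]
    have h1 := norm_fProd_ge hq hw (n+1)
    have h2 := norm_one_sub_ge hq hw (2*(n+1)) (by omega)
    calc (1 - ‖q‖) ^ (n+2) = (1 - ‖q‖)^(n+1) * (1-‖q‖) := by ring
      _ ≤ _ := mul_le_mul h1 h2 hq0.le (norm_nonneg _)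
  exact div_le_div₀ (by positivity) hnum (by positivity) hden
-- continuation: g/v norm bounds and summability
lemma norm_gTerm_le {q w : ℂ} (hq : ‖q‖ < 1) (hw : ‖w‖ ≤ 1) (n : ℕ) :
    ‖gTerm q w n‖ ≤ ‖q‖ ^ ((n+1)*(n+2)/2) * 2 ^ n / (1 - ‖q‖) ^ (n + 1) := by
  have hq0 : (0:ℝ) < 1 - ‖q‖ := by linarith
  unfold gTerm
  rw [norm_div]
  have hnum : ‖w ^ (n + 1) * q ^ ((n + 1) * (n + 2) / 2) * qPoch q q n‖ ≤
      ‖q‖ ^ ((n+1)*(n+2)/2) * 2 ^ n := by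
    rw [norm_mul, norm_mul, norm_pow, norm_pow]
    have h1 : ‖w‖ ^ (n+1) ≤ 1 := pow_le_one₀ (norm_nonneg w) hw
    have h2 := norm_qPoch_q_le hq n
    calc ‖w‖ ^ (n+1) * ‖q‖ ^ ((n+1)*(n+2)/2) * ‖qPoch q q n‖
        ≤ 1 * ‖q‖ ^ ((n+1)*(n+2)/2) * 2 ^ n := by
          apply mul_le_mul (mul_le_mul h1 le_rfl (by positivity) zero_le_one) h2
            (norm_nonneg _) (by positivity)
      _ = _ := by ring
  exact div_le_div₀ (by positivity) hnum (by positivity) (norm_qPoch_wq_ge hq hw (n+1))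

lemma norm_vTerm_le {q w : ℂ} (hq : ‖q‖ < 1) (hw : ‖w‖ ≤ 1) (n : ℕ) :
    ‖vTerm q w n‖ ≤ ‖q‖ ^ ((n+1)*(n+2)/2) * 2 ^ n / (1 - ‖q‖) ^ (n + 2) := by
  have hq0 : (0:ℝ) < 1 - ‖q‖ := by linarith
  unfold vTerm
  rw [norm_div]
  have hnum : ‖w ^ (n + 1) * q ^ ((n + 1) * (n + 2) / 2) * qPoch q q n‖ ≤
      ‖q‖ ^ ((n+1)*(n+2)/2) * 2 ^ n := by
    rw [norm_mul, norm_mul, norm_pow, norm_pow]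
    have h1 : ‖w‖ ^ (n+1) ≤ 1 := pow_le_one₀ (norm_nonneg w) hw
    have h2 := norm_qPoch_q_le hq n
    calc ‖w‖ ^ (n+1) * ‖q‖ ^ ((n+1)*(n+2)/2) * ‖qPoch q q n‖
        ≤ 1 * ‖q‖ ^ ((n+1)*(n+2)/2) * 2 ^ n := by
          apply mul_le_mul (mul_le_mul h1 le_rfl (by positivity) zero_le_one) h2
            (norm_nonneg _) (by positivity)
      _ = _ := by ring
  exact div_le_div₀ (by positivity) hnum (by positivity) (norm_qPoch_wq_ge hq hw (n+2))

-- envelopes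
noncomputable def aF (c : ℝ) (n : ℕ) : ℝ := c ^ ((n+1)^2) / (1 - c) ^ (n + 2)
noncomputable def aG (c : ℝ) (n : ℕ) : ℝ := c ^ ((n+1)*(n+2)/2) * 2 ^ n / (1 - c) ^ (n + 1)
noncomputable def aV (c : ℝ) (n : ℕ) : ℝ := c ^ ((n+1)*(n+2)/2) * 2 ^ n / (1 - c) ^ (n + 2)

lemma pow_small_eventually {c : ℝ} (h0 : 0 ≤ c) (h1 : c < 1) (ε : ℝ) (hε : 0 < ε) :
    ∀ᶠ n in Filter.atTop, c ^ n ≤ ε := by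
  have := tendsto_pow_atTop_nhds_zero_of_lt_one h0 h1
  filter_upwards [this.eventually (gt_mem_nhds hε)] with n hn
  exact hn.le

lemma summable_aF {c : ℝ} (h0 : 0 ≤ c) (h1 : c < 1) : Summable (aF c) := by
  have hc : (0:ℝ) < 1 - c := by linarith
  apply summable_of_ratio_norm_eventually_le (r := 1/2) (by norm_num)
  filter_upwards [pow_small_eventually h0 h1 ((1-c)/2) (by positivity)] with n hn
  have key : aF c (n+1) = aF c n * (c ^ (2*n+3) / (1 - c)) := by
    unfold aF
    rw [show ((n+1)+1)^2 = (n+1)^2 + (2*n+3) by ring, pow_add]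
    rw [div_mul_div_comm, ← pow_succ]
  have hb : c ^ (2*n+3) ≤ (1-c)/2 := by
    calc c ^ (2*n+3) ≤ c ^ n := pow_le_pow_of_le_one h0 h1.le (by omega)
      _ ≤ (1-c)/2 := hn
  have hFn : 0 ≤ aF c n := by unfold aF; positivity
  rw [Real.norm_eq_abs, Real.norm_eq_abs, abs_of_nonneg (by unfold aF; positivity),
    abs_of_nonneg hFn, key]
  have hb2 : c ^ (2*n+3) / (1-c) ≤ 1/2 := by
    rw [div_le_iff₀ hc]; linarith
  calc aF c n * (c ^ (2*n+3) / (1 - c)) ≤ aF c n * (1/2) :=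
        mul_le_mul_of_nonneg_left hb2 hFn
    _ = 1/2 * aF c n := by ring
-- continuation: summable aG, aV
lemma tri_succ (n : ℕ) : ((n+1)+1)*((n+1)+2)/2 = (n+1)*(n+2)/2 + (n+2) := by
  have h : (n+1+1)*(n+1+2) = (n+1)*(n+2) + 2*(n+2) := by ring
  omega

lemma summable_aG {c : ℝ} (h0 : 0 ≤ c) (h1 : c < 1) : Summable (aG c) := by
  have hc : (0:ℝ) < 1 - c := by linarith
  apply summable_of_ratio_norm_eventually_le (r := 1/2) (by norm_num)
  filter_upwards [pow_small_eventually h0 h1 ((1-c)/4) (by positivity)] with n hn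
  have key : aG c (n+1) = aG c n * (c ^ (n+2) * 2 / (1 - c)) := by
    unfold aG
    rw [tri_succ, pow_add, pow_succ (2:ℝ)]
    rw [div_mul_div_comm, ← pow_succ]
    ring_nf
  have hb : c ^ (n+2) ≤ (1-c)/4 := by
    calc c ^ (n+2) ≤ c ^ n := pow_le_pow_of_le_one h0 h1.le (by omega)
      _ ≤ (1-c)/4 := hn
  have hGn : 0 ≤ aG c n := by unfold aG; positivity
  rw [Real.norm_eq_abs, Real.norm_eq_abs, abs_of_nonneg (by unfold aG; positivity),
    abs_of_nonneg hGn, key]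
  have hb2 : c ^ (n+2) * 2 / (1-c) ≤ 1/2 := by
    rw [div_le_iff₀ hc]; linarith
  calc aG c n * (c ^ (n+2) * 2 / (1 - c)) ≤ aG c n * (1/2) :=
        mul_le_mul_of_nonneg_left hb2 hGn
    _ = 1/2 * aG c n := by ring

lemma summable_aV {c : ℝ} (h0 : 0 ≤ c) (h1 : c < 1) : Summable (aV c) := by
  have hc : (0:ℝ) < 1 - c := by linarith
  have key : ∀ n, aV c n = (1/(1-c)) * aG c n := by
    intro n
    unfold aV aG
    rw [pow_succ, ← div_div]
    ring
  have := (summable_aG h0 h1).mul_left (1/(1-c))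
  exact this.congr fun n => (key n).symm

-- summability of the complex series
lemma summable_fTerm {q w : ℂ} (hq : ‖q‖ < 1) (hw : ‖w‖ ≤ 1) :
    Summable (fTerm q w) := by
  apply Summable.of_norm_bounded (summable_aF (norm_nonneg q) hq)
  exact norm_fTerm_le hq hw

lemma summable_gTerm {q w : ℂ} (hq : ‖q‖ < 1) (hw : ‖w‖ ≤ 1) :
    Summable (gTerm q w) := by
  apply Summable.of_norm_bounded (summable_aG (norm_nonneg q) hq)
  exact norm_gTerm_le hq hw

lemma summable_vTerm {q w : ℂ} (hq : ‖q‖ < 1) (hw : ‖w‖ ≤ 1) :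
    Summable (vTerm q w) := by
  apply Summable.of_norm_bounded (summable_aV (norm_nonneg q) hq)
  exact norm_vTerm_le hq hw

lemma vTerm_tendsto_zero {q w : ℂ} (hq : ‖q‖ < 1) (hw : ‖w‖ ≤ 1) :
    Filter.Tendsto (vTerm q w) Filter.atTop (nhds 0) :=
  (summable_vTerm hq hw).tendsto_atTop_zero

-- uniform bounds on the sums
lemma norm_tsum_fTerm_le {q w : ℂ} (hq : ‖q‖ < 1) (hw : ‖w‖ ≤ 1) :
    ‖∑' n, fTerm q w n‖ ≤ ∑' n, aF ‖q‖ n := by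
  calc ‖∑' n, fTerm q w n‖ ≤ ∑' n, ‖fTerm q w n‖ :=
        norm_tsum_le_tsum_norm ((summable_fTerm hq hw).norm)
    _ ≤ ∑' n, aF ‖q‖ n := by
        apply Summable.tsum_le_tsum (norm_fTerm_le hq hw) (summable_fTerm hq hw).norm
          (summable_aF (norm_nonneg q) hq)

lemma norm_tsum_gTerm_le {q w : ℂ} (hq : ‖q‖ < 1) (hw : ‖w‖ ≤ 1) :
    ‖∑' n, gTerm q w n‖ ≤ ∑' n, aG ‖q‖ n := by
  calc ‖∑' n, gTerm q w n‖ ≤ ∑' n, ‖gTerm q w n‖ :=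
        norm_tsum_le_tsum_norm ((summable_gTerm hq hw).norm)
    _ ≤ ∑' n, aG ‖q‖ n := by
        apply Summable.tsum_le_tsum (norm_gTerm_le hq hw) (summable_gTerm hq hw).norm
          (summable_aG (norm_nonneg q) hq)
-- continuation: termwise identities
lemma fTerm_rec {q w : ℂ} (hq : ‖q‖ < 1) (hw : ‖w‖ ≤ 1) (n : ℕ) :
    fTerm q w (n+1) = (-(w*q)/(1 - w*q)) * fTerm q (w*q^2) n := by
  have h1 : (1:ℂ) - w*q ≠ 0 := by
    have h := one_sub_ne hq hw 1 le_rfl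
    simpa using h
  have hA : (∏ k ∈ Finset.range (n+1), (1 - w*q^2 * q^(2*k+1))) ≠ 0 := by
    apply Finset.prod_ne_zero_iff.mpr
    intro k _
    have h := one_sub_ne hq hw (2*k+3) (by omega)
    intro hc; apply h; rw [← hc]; ring_nf
  have hB : (1:ℂ) - w*q^2 * q^(2*(n+1)) ≠ 0 := by
    have h := one_sub_ne hq hw (2*n+4) (by omega)
    intro hc; apply h; rw [← hc]; ring_nf
  have hsplit : (∏ k ∈ Finset.range (n+1+1), (1 - w * q^(2*k+1)))
      = (∏ k ∈ Finset.range (n+1), (1 - w*q^2 * q^(2*k+1))) * (1 - w*q) := by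
    rw [Finset.prod_range_succ']
    congr 1
    · apply Finset.prod_congr rfl
      intro k _
      congr 1
      ring
    · norm_num
  unfold fTerm
  rw [hsplit]
  have hlast : (1:ℂ) - w * q^(2*(n+1+1)) = 1 - w*q^2 * q^(2*(n+1)) := by
    congr 1; ring
  rw [hlast]
  field_simp
  ring

lemma gTerm_rec {q w : ℂ} (hq : ‖q‖ < 1) (hw : ‖w‖ ≤ 1) (n : ℕ) :
    gTerm q w n + ((w*q)/(1 - w*q)) * gTerm q (w*q^2) n
      = vTerm q w n - vTerm q w (n+1) := by
  have h1 : (1:ℂ) - w*q ≠ 0 := by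
    have h := one_sub_ne hq hw 1 le_rfl; simpa using h
  have hQ : qPoch (w*q) q (n+1) ≠ 0 := qPoch_wq_ne hq hw (n+1)
  have hu : (1:ℂ) - w*q^(n+2) ≠ 0 := one_sub_ne hq hw (n+2) (by omega)
  have hs : (1:ℂ) - w*q^(n+3) ≠ 0 := one_sub_ne hq hw (n+3) (by omega)
  have hR : qPoch (w*q^2*q) q (n+1) ≠ 0 := by
    unfold qPoch
    apply Finset.prod_ne_zero_iff.mpr
    intro k _
    have h := one_sub_ne hq hw (k+3) (by omega)
    intro hc; apply h; rw [← hc]; ring_nf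
  -- product relations
  have hshift : ∀ (a : ℂ) (m : ℕ), qPoch a q (m+1) = (1 - a) * qPoch (a*q) q m := by
    intro a m
    unfold qPoch
    rw [Finset.prod_range_succ']
    rw [Finset.prod_congr rfl (fun k _ => show (1:ℂ) - a*q^(k+1) = 1 - a*q*q^k by ring)]
    simp [mul_comm]
  have hQ2 : qPoch (w*q) q (n+2) = qPoch (w*q) q (n+1) * (1 - w*q^(n+2)) := by
    unfold qPoch
    rw [Finset.prod_range_succ, show w*q*q^(n+1) = w*q^(n+2) by ring]
  have hQ3 : qPoch (w*q) q (n+3) = qPoch (w*q) q (n+1) * (1 - w*q^(n+2)) * (1 - w*q^(n+3)) := by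
    unfold qPoch
    rw [show n+3 = (n+2)+1 from rfl, Finset.prod_range_succ, Finset.prod_range_succ,
      show w*q*q^(n+1) = w*q^(n+2) by ring, show w*q*q^(n+2) = w*q^(n+3) by ring]
  have hrel : (1 - w*q) * (1 - w*q^2) * qPoch (w*q^2*q) q (n+1)
      = qPoch (w*q) q (n+1) * (1 - w*q^(n+2)) * (1 - w*q^(n+3)) := by
    rw [← hQ3]
    rw [show n+3 = (n+2)+1 from rfl, hshift (w*q) (n+2),
      show n+2 = (n+1)+1 from rfl, hshift (w*q*q) (n+1),
      show w*q*q*q = w*q^2*q by ring, show w*q*q = w*q^2 by ring]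
    ring
  have h2 : (1:ℂ) - w*q^2 ≠ 0 := one_sub_ne hq hw 2 (by omega)
  have hQus : qPoch (w*q) q (n+1) * (1 - w*q^(n+2)) * (1 - w*q^(n+3)) ≠ 0 :=
    mul_ne_zero (mul_ne_zero hQ hu) hs
  have hB' : ((w*q)/(1 - w*q)) * gTerm q (w*q^2) n
      = w*q * ((w*q^2)^(n+1) * q^((n+1)*(n+2)/2) * qPoch q q n) * (1 - w*q^2)
        / (qPoch (w*q) q (n+1) * (1 - w*q^(n+2)) * (1 - w*q^(n+3))) := by
    unfold gTerm
    rw [div_mul_div_comm, div_eq_div_iff (mul_ne_zero h1 hR) hQus]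
    linear_combination (-(w*q * ((w*q^2)^(n+1) * q^((n+1)*(n+2)/2) * qPoch q q n))) * hrel
  have hP1 : qPoch q q (n+1) = qPoch q q n * (1 - q*q^n) := Finset.prod_range_succ _ _
  have htri : ((n+1)+1)*((n+1)+2)/2 = (n+1)*(n+2)/2 + (n+2) := tri_succ n
  rw [hB']
  unfold gTerm vTerm
  rw [hQ2, hQ3, hP1, htri, pow_add]
  field_simp [hQ, hu, hs]
  ring
-- continuation: functional equations for the sums
lemma hw2_of {q w : ℂ} (hq : ‖q‖ < 1) (hw : ‖w‖ ≤ 1) : ‖w * q^2‖ ≤ 1 :=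
  le_trans (norm_wqk_le hq hw 2 (by omega)) hq.le

lemma fTerm_zero_eq {q w : ℂ} : fTerm q w 0 = vTerm q w 0 := by
  unfold fTerm vTerm qPoch
  simp [Finset.prod_range_succ]
  ring_nf

lemma F_eq {q w : ℂ} (hq : ‖q‖ < 1) (hw : ‖w‖ ≤ 1) :
    (∑' n, fTerm q w n) = vTerm q w 0 + (-(w*q)/(1 - w*q)) * ∑' n, fTerm q (w*q^2) n := by
  rw [Summable.tsum_eq_zero_add (summable_fTerm hq hw), fTerm_zero_eq]
  congr 1
  rw [tsum_congr (fun n => fTerm_rec hq hw n), tsum_mul_left]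

lemma G_eq {q w : ℂ} (hq : ‖q‖ < 1) (hw : ‖w‖ ≤ 1) :
    (∑' n, gTerm q w n) = vTerm q w 0 + (-(w*q)/(1 - w*q)) * ∑' n, gTerm q (w*q^2) n := by
  have hw2 : ‖w * q^2‖ ≤ 1 := hw2_of hq hw
  have hs1 := summable_gTerm hq hw
  have hs2 := (summable_gTerm hq hw2).mul_left ((w*q)/(1 - w*q))
  have htel : HasSum (fun n => vTerm q w n - vTerm q w (n+1)) (vTerm q w 0) := by
    have hsum : Summable (fun n => vTerm q w n - vTerm q w (n+1)) := by
      exact (summable_vTerm hq hw).sub ((summable_nat_add_iff 1).mpr (summable_vTerm hq hw))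
    rw [hsum.hasSum_iff_tendsto_nat]
    have hps : ∀ N, ∑ i ∈ Finset.range N, (vTerm q w i - vTerm q w (i+1))
        = vTerm q w 0 - vTerm q w N := fun N => Finset.sum_range_sub' (vTerm q w) N
    have ht : Filter.Tendsto (fun N => vTerm q w 0 - vTerm q w N) Filter.atTop
        (nhds (vTerm q w 0 - 0)) := tendsto_const_nhds.sub (vTerm_tendsto_zero hq hw)
    rw [sub_zero] at ht
    exact ht.congr fun N => (hps N).symm
  have key : (∑' n, (gTerm q w n + ((w*q)/(1 - w*q)) * gTerm q (w*q^2) n)) = vTerm q w 0 := by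
    rw [tsum_congr (fun n => gTerm_rec hq hw n)]
    exact htel.tsum_eq
  rw [Summable.tsum_add hs1 hs2, tsum_mul_left] at key
  rw [neg_div, neg_mul, ← sub_eq_iff_eq_add'] at *
  linear_combination key
-- continuation: main argument
lemma D_eq {q w : ℂ} (hq : ‖q‖ < 1) (hw : ‖w‖ ≤ 1) :
    (∑' n, fTerm q w n) - (∑' n, gTerm q w n)
      = (-(w*q)/(1 - w*q)) *
        ((∑' n, fTerm q (w*q^2) n) - (∑' n, gTerm q (w*q^2) n)) := by
  rw [F_eq hq hw, G_eq hq hw]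
  ring

theorem stmt19' (q z : ℂ) (hq : ‖q‖ < 1) (hz : ‖z‖ ≤ 1) :
    (∑' n, fTerm q z n) = ∑' n, gTerm q z n := by
  have hq0 : (0:ℝ) < 1 - ‖q‖ := by linarith
  set D : ℂ → ℂ := fun w => (∑' n, fTerm q w n) - (∑' n, gTerm q w n) with hD
  set M : ℝ := (∑' n, aF ‖q‖ n) + (∑' n, aG ‖q‖ n) with hM
  have hM0 : 0 ≤ M := by
    apply add_nonneg
    · exact tsum_nonneg (fun n => by unfold aF; positivity)
    · exact tsum_nonneg (fun n => by unfold aG; positivity)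
  have hDle : ∀ w : ℂ, ‖w‖ ≤ 1 → ‖D w‖ ≤ M := by
    intro w hw
    calc ‖D w‖ ≤ ‖∑' n, fTerm q w n‖ + ‖∑' n, gTerm q w n‖ := norm_sub_le _ _
      _ ≤ M := add_le_add (norm_tsum_fTerm_le hq hw) (norm_tsum_gTerm_le hq hw)
  have hwm : ∀ m : ℕ, ‖z * q ^ (2*m)‖ ≤ 1 := by
    intro m
    rw [norm_mul, norm_pow]
    have h1 : ‖q‖ ^ (2*m) ≤ 1 := pow_le_one₀ (norm_nonneg q) hq.le
    calc ‖z‖ * ‖q‖ ^ (2*m) ≤ 1 * 1 := mul_le_mul hz h1 (by positivity) zero_le_one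
      _ = 1 := one_mul 1
  have hiter : ∀ m : ℕ, D z
      = (∏ i ∈ Finset.range m, (-(z*q^(2*i+1))/(1 - z*q^(2*i+1)))) * D (z * q^(2*m)) := by
    intro m
    induction m with
    | zero => simp
    | succ m ih =>
      rw [ih, Finset.prod_range_succ]
      have hstep := D_eq hq (hwm m)
      have harg : z * q^(2*m) * q^2 = z * q^(2*(m+1)) := by ring
      have hco : -(z * q^(2*m) * q) / (1 - z * q^(2*m) * q)
          = -(z*q^(2*m+1))/(1 - z*q^(2*m+1)) := by
        rw [show z * q^(2*m) * q = z*q^(2*m+1) by ring]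
      change D (z * q^(2*m)) = _ at hstep
      rw [harg, hco] at hstep
      rw [hstep]
      ring
  set r : ℕ → ℝ := fun i => ‖q‖^(2*i+1)/(1-‖q‖) with hrdef
  set P : ℕ → ℝ := fun m => ∏ i ∈ Finset.range m, r i with hPdef
  have hr0 : ∀ i, 0 ≤ r i := fun i => by rw [hrdef]; positivity
  have hP0 : ∀ m, 0 ≤ P m := fun m => Finset.prod_nonneg (fun i _ => hr0 i)
  have hcoef : ∀ i : ℕ, ‖-(z*q^(2*i+1))/(1 - z*q^(2*i+1))‖ ≤ r i := by
    intro i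
    rw [norm_div, norm_neg]
    have hnum : ‖z*q^(2*i+1)‖ ≤ ‖q‖^(2*i+1) := by
      rw [norm_mul, norm_pow]
      exact mul_le_of_le_one_left (by positivity) hz
    exact div_le_div₀ (by positivity) hnum hq0 (norm_one_sub_ge hq hz (2*i+1) (by omega))
  have hPbound : ∀ m, ‖∏ i ∈ Finset.range m, (-(z*q^(2*i+1))/(1 - z*q^(2*i+1)))‖ ≤ P m := by
    intro m
    rw [norm_prod]
    exact Finset.prod_le_prod (fun i _ => norm_nonneg _) (fun i _ => hcoef i)
  have hDbz : ∀ m, ‖D z‖ ≤ P m * M := by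
    intro m
    rw [hiter m, norm_mul]
    exact mul_le_mul (hPbound m) (hDle _ (hwm m)) (norm_nonneg _) (hP0 m)
  obtain ⟨I, hI⟩ : ∃ I : ℕ, ∀ i ≥ I, r i ≤ 1/2 := by
    have hev := pow_small_eventually (norm_nonneg q) hq ((1-‖q‖)/2) (by positivity)
    rw [Filter.eventually_atTop] at hev
    obtain ⟨I, hI⟩ := hev
    refine ⟨I, fun i hi => ?_⟩
    have h1 : ‖q‖^(2*i+1) ≤ ‖q‖^i := pow_le_pow_of_le_one (norm_nonneg q) hq.le (by omega)
    have h2 := hI i hi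
    rw [hrdef]
    show ‖q‖^(2*i+1)/(1-‖q‖) ≤ 1/2
    rw [div_le_iff₀ hq0]
    linarith
  have hPle : ∀ m, I ≤ m → P m ≤ (P I * 2^I) * (1/2)^m := by
    intro m hm
    induction m, hm using Nat.le_induction with
    | base =>
      have : (2:ℝ)^I * (1/2)^I = 1 := by
        rw [← mul_pow]; norm_num
      rw [mul_assoc, this, mul_one]
    | succ m hm ih =>
      have hPm : P (m+1) = P m * r m := Finset.prod_range_succ r m
      rw [hPm]
      calc P m * r m ≤ ((P I * 2^I) * (1/2)^m) * (1/2) := by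
            apply mul_le_mul ih (hI m hm) (hr0 m)
            positivity
        _ = (P I * 2^I) * (1/2)^(m+1) := by rw [mul_assoc, ← pow_succ]
  have htends : Filter.Tendsto (fun m : ℕ => P m * M) Filter.atTop (nhds 0) := by
    apply squeeze_zero' (Filter.Eventually.of_forall (fun m => mul_nonneg (hP0 m) hM0))
    · rw [Filter.eventually_atTop]
      exact ⟨I, fun m hm => mul_le_mul_of_nonneg_right (hPle m hm) hM0⟩
    · have h := tendsto_pow_atTop_nhds_zero_of_lt_one (by norm_num : (0:ℝ) ≤ 1/2) (by norm_num)
      have h2 := h.const_mul ((P I * 2^I) * M)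
      rw [mul_zero] at h2
      refine h2.congr fun m => by ring
  have hfin : ‖D z‖ ≤ 0 := ge_of_tendsto htends (Filter.Eventually.of_forall hDbz)
  have : D z = 0 := norm_le_zero_iff.mp hfin
  exact sub_eq_zero.mp this

/-- Garvan's identity (equation (2.9)): for |q| < 1, |z| ≤ 1,
∑_{n≥1} (−1)^{n−1} z^n q^{n²}/((zq;q²)_n (1 − z q^{2n}))
  = ∑_{n≥1} z^n q^{n(n+1)/2} (q;q)_{n−1}/(zq;q)_n,
where (zq;q²)_n = ∏_{k=0}^{n-1}(1 − z q^{2k+1}). -/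
theorem stmt19 (q z : ℂ) (hq : ‖q‖ < 1) (hz : ‖z‖ ≤ 1) :
    ∑' n : ℕ, (-1) ^ n * z ^ (n + 1) * q ^ ((n + 1) ^ 2) /
        ((∏ k ∈ Finset.range (n + 1), (1 - z * q ^ (2 * k + 1))) *
          (1 - z * q ^ (2 * (n + 1)))) =
      ∑' n : ℕ, z ^ (n + 1) * q ^ ((n + 1) * (n + 2) / 2) * qPoch q q n /
        qPoch (z * q) q (n + 1) := by
  have hq' : ‖q‖ < 1 := hq
  have hz' : ‖z‖ ≤ 1 := hz
  exact stmt19' q z hq' hz'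
end
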